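/- arXiv:2511.10132 — 2 statements merged into one kernel-verified Lean document; each statement's English description precedes it below -/
import Mathlib

section
/- Spectral radius of the Schur-type reduction of a nonnegative block matrix (from the proof of Proposition 5.6): Let d₁, d₂ ≥ 1 and let N be a real (d₁+d₂)×(d₁+d₂) matrix with nonnegative entries, written in block form N = [[A, B],[C, D]] with A of size d₁×d₁ and D of size d₂×d₂. If the spectral radius of N is strictly less than 1, then the spectral radius of D is strictly less than 1, I−D is invertible, every entry of (I−D)^{-1} = Σ_{n≥0} Dⁿ is nonnegative, and the spectral radius of A + B (I−D)^{-1} C is at most the spectral radius of N. -/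
open scoped BigOperators ENNReal
open Matrix Filter

namespace Stmt12Aux

variable {n : Type*} [Fintype n] [DecidableEq n]

/-- Key lemma: positive sub-invariant vector bounds the spectral radius. -/
lemma key (M : Matrix n n ℝ) (hM : ∀ i j, 0 ≤ M i j) {t : ℝ}
    (x : n → ℝ) (hx : ∀ i, 0 < x i)
    (hMx : ∀ i, (M *ᵥ x) i ≤ t * x i) :
    spectralRadius ℂ (M.map (algebraMap ℝ ℂ)) ≤ ENNReal.ofReal t := by
  set Mc := M.map (algebraMap ℝ ℂ) with hMc
  rw [spectralRadius]
  refine iSup₂_le fun lam hlam => ?_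
  rw [← ENNReal.ofReal_coe_nnreal, coe_nnnorm]
  refine ENNReal.ofReal_le_ofReal ?_
  -- extract an eigenvector
  rw [spectrum.mem_iff] at hlam
  rw [Matrix.isUnit_iff_isUnit_det, isUnit_iff_ne_zero, not_ne_iff] at hlam
  obtain ⟨v, hv0, hv⟩ := (Matrix.exists_mulVec_eq_zero_iff).2 hlam
  have hev : Mc *ᵥ v = lam • v := by
    have h1 : (algebraMap ℂ (Matrix n n ℂ) lam - Mc) *ᵥ v = 0 := hv
    rw [Matrix.sub_mulVec, Algebra.algebraMap_eq_smul_one, Matrix.smul_mulVec,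
      Matrix.one_mulVec, sub_eq_zero] at h1
    exact h1.symm
  set w : n → ℝ := fun j => ‖v j‖ with hw
  obtain ⟨j₀, hj₀⟩ := Function.ne_iff.1 hv0
  have hwj₀ : 0 < w j₀ := by simpa [hw] using hj₀
  obtain ⟨i, -, hi⟩ := Finset.exists_max_image Finset.univ (fun i => w i / x i)
    ⟨j₀, Finset.mem_univ j₀⟩
  set c := w i / x i with hc
  have hcpos : 0 < c := lt_of_lt_of_le (div_pos hwj₀ (hx j₀)) (hi j₀ (Finset.mem_univ j₀))
  have hwc : ∀ j, w j ≤ c * x j := fun j =>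
    (div_le_iff₀ (hx j)).1 (hi j (Finset.mem_univ j))
  have hwi : w i = c * x i := by
    rw [hc, div_mul_cancel₀ _ (hx i).ne']
  have hlamwi : ‖lam‖ * w i ≤ t * w i := by
    have hevi : lam * v i = ∑ j, (M i j : ℂ) * v j := by
      have := congrFun hev i
      simp [Matrix.mulVec, dotProduct, hMc, Matrix.map_apply] at this
      simpa using this.symm
    calc ‖lam‖ * w i = ‖lam * v i‖ := by simp [hw]
    _ = ‖∑ j, (M i j : ℂ) * v j‖ := by rw [hevi]
    _ ≤ ∑ j, ‖(M i j : ℂ) * v j‖ := by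
        exact norm_sum_le _ _
    _ = ∑ j, M i j * w j := by
        refine Finset.sum_congr rfl fun j _ => ?_
        simp [hw, Complex.norm_real, abs_of_nonneg (hM i j)]
    _ ≤ ∑ j, M i j * (c * x j) := by
        refine Finset.sum_le_sum fun j _ => mul_le_mul_of_nonneg_left (hwc j) (hM i j)
    _ = c * (M *ᵥ x) i := by
        simp only [Matrix.mulVec, dotProduct, Finset.mul_sum]
        exact Finset.sum_congr rfl fun j _ => by ring
    _ ≤ c * (t * x i) := mul_le_mul_of_nonneg_left (hMx i) hcpos.le
    _ = t * w i := by rw [hwi]; ring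
  have hwipos : 0 < w i := by rw [hwi]; exact mul_pos hcpos (hx i)
  have := le_of_mul_le_mul_right hlamwi hwipos
  simpa using this


lemma pow_entry_nonneg (M : Matrix n n ℝ) (hM : ∀ i j, 0 ≤ M i j) :
    ∀ (k : ℕ) (i j : n), 0 ≤ (M ^ k) i j := by
  intro k
  induction k with
  | zero => intro i j; by_cases h : i = j <;> simp [Matrix.one_apply, h]
  | succ k ih =>
    intro i j
    rw [pow_succ, Matrix.mul_apply]
    exact Finset.sum_nonneg fun l _ => mul_nonneg (ih i l) (hM l j)


section NormInstances

attribute [local instance] Matrix.linftyOpNormedAddCommGroup Matrix.linftyOpNormedRing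
  Matrix.linftyOpNormedAlgebra

lemma entry_nnnorm_le (A : Matrix n n ℂ) (i j : n) : ‖A i j‖₊ ≤ ‖A‖₊ := by
  rw [Matrix.linfty_opNNNorm_def]
  refine le_trans ?_ (Finset.le_sup (Finset.mem_univ i))
  exact Finset.single_le_sum (f := fun k => ‖A i k‖₊) (fun k _ => zero_le) (Finset.mem_univ j)

/-- Entrywise geometric decay of powers when the spectral radius is `< ofReal t`. -/
lemma summable_pow_div (M : Matrix n n ℝ) {t : ℝ} (ht : 0 < t)
    (h : spectralRadius ℂ (M.map (algebraMap ℝ ℂ)) < ENNReal.ofReal t) (i j : n) :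
    Summable fun k : ℕ => (M ^ k) i j / t ^ k := by
  haveI : CompleteSpace (Matrix n n ℂ) := FiniteDimensional.complete ℂ _
  set Mc := M.map (algebraMap ℝ ℂ) with hMc
  have hG := spectrum.pow_nnnorm_pow_one_div_tendsto_nhds_spectralRadius Mc
  obtain ⟨r, hr1, hr2⟩ := exists_between h
  have hrtop : r ≠ ⊤ := (hr2.trans_le le_top).ne
  have hev : ∀ᶠ k : ℕ in atTop, (‖Mc ^ k‖₊ : ℝ≥0∞) ^ (1 / (k : ℝ)) < r :=
    hG.eventually_lt_const hr1
  have hpow : ∀ k, Mc ^ k = (M ^ k).map (algebraMap ℝ ℂ) := by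
    intro k
    rw [hMc, ← RingHom.mapMatrix_apply, ← RingHom.mapMatrix_apply, map_pow]
  have hrt : r.toReal < t := by
    have := ENNReal.toReal_lt_toReal hrtop (ENNReal.ofReal_ne_top) |>.2 hr2
    rwa [ENNReal.toReal_ofReal ht.le] at this
  have hbound : ∀ᶠ k : ℕ in atTop, |(M ^ k) i j / t ^ k| ≤ (r.toReal / t) ^ k := by
    filter_upwards [hev, eventually_ge_atTop 1] with k hk hk1
    have hne : (k : ℝ) ≠ 0 := Nat.cast_ne_zero.2 (by omega)
    have h1 : (‖Mc ^ k‖₊ : ℝ≥0∞) ≤ r ^ (k : ℝ) := by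
      have := ENNReal.rpow_le_rpow hk.le (Nat.cast_nonneg k : (0:ℝ) ≤ k)
      rwa [← ENNReal.rpow_mul, one_div, inv_mul_cancel₀ hne, ENNReal.rpow_one] at this
    have h2 : ‖(Mc ^ k) i j‖ ≤ r.toReal ^ k := by
      have h3 : (‖(Mc ^ k) i j‖₊ : ℝ≥0∞) ≤ r ^ (k : ℝ) :=
        le_trans (by exact_mod_cast entry_nnnorm_le (Mc ^ k) i j) h1
      have h4 := ENNReal.toReal_mono (by simp [ENNReal.rpow_natCast, hrtop,
        ENNReal.pow_ne_top]) h3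
      simpa [ENNReal.rpow_natCast, ENNReal.toReal_pow] using h4
    have h5 : |(M ^ k) i j| ≤ r.toReal ^ k := by
      have := h2
      rw [hpow k] at this
      simpa [Matrix.map_apply, Complex.norm_real, Real.norm_eq_abs] using this
    rw [abs_div, abs_of_nonneg (pow_nonneg ht.le k), div_pow]
    gcongr
  have hgeom : Summable fun k : ℕ => (r.toReal / t) ^ k :=
    summable_geometric_of_lt_one (div_nonneg ENNReal.toReal_nonneg ht.le)
      ((div_lt_one ht).2 hrt)
  exact hgeom.of_norm_bounded_eventually_nat (by
    refine hbound.mono fun k hk => ?_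
    simpa [Real.norm_eq_abs, abs_div, abs_pow] using hk)


end NormInstances

lemma master {d₁ d₂ : ℕ}
    (A : Matrix (Fin d₁) (Fin d₁) ℝ) (B : Matrix (Fin d₁) (Fin d₂) ℝ)
    (C : Matrix (Fin d₂) (Fin d₁) ℝ) (Dm : Matrix (Fin d₂) (Fin d₂) ℝ)
    (hA : ∀ i j, 0 ≤ A i j) (hB : ∀ i j, 0 ≤ B i j)
    (hC : ∀ i j, 0 ≤ C i j) (hD : ∀ i j, 0 ≤ Dm i j)
    {t : ℝ} (ht0 : 0 < t) (ht1 : t < 1)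
    (hN : spectralRadius ℂ ((Matrix.fromBlocks A B C Dm).map (algebraMap ℝ ℂ)) <
      ENNReal.ofReal t) :
    spectralRadius ℂ (Dm.map (algebraMap ℝ ℂ)) < 1 ∧
      IsUnit (1 - Dm) ∧
      (∀ i j, (1 - Dm)⁻¹ i j = ∑' k : ℕ, (Dm ^ k) i j) ∧
      (∀ i j, 0 ≤ (1 - Dm)⁻¹ i j) ∧
      spectralRadius ℂ ((A + B * (1 - Dm)⁻¹ * C).map (algebraMap ℝ ℂ)) ≤
        ENNReal.ofReal t := by
  classical
  set N := Matrix.fromBlocks A B C Dm with hNdef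
  have hNnn : ∀ i j, 0 ≤ N i j := by
    rintro (i | i) (j | j)
    · simpa [hNdef] using hA i j
    · simpa [hNdef] using hB i j
    · simpa [hNdef] using hC i j
    · simpa [hNdef] using hD i j
  have hNk := pow_entry_nonneg N hNnn
  have hSumE : ∀ i j, Summable fun k : ℕ => (N ^ k) i j / t ^ k :=
    summable_pow_div N ht0 hN
  set f : ℕ → (Fin d₁ ⊕ Fin d₂) → ℝ := fun k i => (∑ j, (N ^ k) i j) / t ^ k with hf
  have hfeq : ∀ k i, f k i = ∑ j, (N ^ k) i j / t ^ k := fun k i => by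
    rw [hf]; exact Finset.sum_div _ _ _
  have hfs : ∀ i, Summable fun k => f k i := fun i =>
    (summable_sum fun j _ => hSumE i j).congr fun k => (hfeq k i).symm
  have hfnn : ∀ k i, 0 ≤ f k i := fun k i =>
    div_nonneg (Finset.sum_nonneg fun j _ => hNk k i j) (pow_nonneg ht0.le k)
  set u : (Fin d₁ ⊕ Fin d₂) → ℝ := fun i => ∑' k, f k i with hu
  have hf0 : ∀ i, f 0 i = 1 := fun i => by
    rw [hf]; simp [Matrix.one_apply]
  have hu1 : ∀ i, 1 ≤ u i := fun i => by
    rw [hu]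
    calc (1 : ℝ) = f 0 i := (hf0 i).symm
    _ ≤ ∑' k, f k i := Summable.le_tsum (hfs i) 0 fun k _ => hfnn k i
  have hupos : ∀ i, 0 < u i := fun i => lt_of_lt_of_le one_pos (hu1 i)
  have hNu : ∀ i, (N *ᵥ u) i = t * u i - t := by
    intro i
    have step4 : ∀ k, ∑ j, N i j * f k j = t * f (k + 1) i := by
      intro k
      have e2 : t * f (k + 1) i = ∑ j', (N ^ (k + 1)) i j' / t ^ k := by
        rw [hfeq, Finset.mul_sum]
        refine Finset.sum_congr rfl fun j' _ => ?_
        rw [pow_succ]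
        field_simp
        ring
      rw [e2]
      calc ∑ j, N i j * f k j
          = ∑ j, ∑ j', N i j * (N ^ k) j j' / t ^ k := by
            refine Finset.sum_congr rfl fun j _ => ?_
            rw [hfeq, Finset.mul_sum]
            exact Finset.sum_congr rfl fun j' _ => by ring
        _ = ∑ j', ∑ j, N i j * (N ^ k) j j' / t ^ k := Finset.sum_comm
        _ = ∑ j', (N ^ (k + 1)) i j' / t ^ k := by
            refine Finset.sum_congr rfl fun j' _ => ?_
            rw [pow_succ', Matrix.mul_apply, Finset.sum_div]
    have hshift : ∑' k, f (k + 1) i = u i - 1 := by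
      have h0 := Summable.tsum_eq_zero_add (hfs i)
      rw [hf0 i] at h0
      rw [hu]
      linarith
    calc (N *ᵥ u) i = ∑ j, N i j * u j := by
          simp [Matrix.mulVec, dotProduct]
      _ = ∑ j, ∑' k, N i j * f k j := by
          refine Finset.sum_congr rfl fun j _ => ?_
          rw [hu, tsum_mul_left]
      _ = ∑' k, ∑ j, N i j * f k j := (Summable.tsum_finsetSum fun j _ => (hfs j).mul_left _).symm
      _ = ∑' k, t * f (k + 1) i := tsum_congr step4
      _ = t * ∑' k, f (k + 1) i := tsum_mul_left
      _ = t * (u i - 1) := by rw [hshift]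
      _ = t * u i - t := by ring
  set x : Fin d₁ → ℝ := fun i => u (Sum.inl i) with hxdef
  set y : Fin d₂ → ℝ := fun j => u (Sum.inr j) with hydef
  have hblock := Matrix.fromBlocks_mulVec A B C Dm u
  have hAB : ∀ i, (A *ᵥ x) i + (B *ᵥ y) i = t * x i - t := by
    intro i
    have h1 := hNu (Sum.inl i)
    rw [← hNdef] at hblock
    rw [hblock] at h1
    simpa [hxdef, hydef, Function.comp_def] using h1
  have hCD : ∀ j, (C *ᵥ x) j + (Dm *ᵥ y) j = t * y j - t := by
    intro j
    have h1 := hNu (Sum.inr j)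
    rw [← hNdef] at hblock
    rw [hblock] at h1
    simpa [hxdef, hydef, Function.comp_def] using h1
  have hxpos : ∀ i, 0 < x i := fun i => hupos _
  have hypos : ∀ j, 0 < y j := fun j => hupos _
  have hmulVec_nonneg : ∀ {m l : Type} [Fintype m] [Fintype l]
      (M : Matrix m l ℝ) (v : l → ℝ), (∀ i j, 0 ≤ M i j) → (∀ j, 0 ≤ v j) →
      ∀ i, 0 ≤ (M *ᵥ v) i := by
    intro m l _ _ M v hM hv i
    simp only [Matrix.mulVec, dotProduct]
    exact Finset.sum_nonneg fun j _ => mul_nonneg (hM i j) (hv j)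
  -- spectral radius of D bound
  have hDy : ∀ j, (Dm *ᵥ y) j ≤ t * y j := by
    intro j
    have := hCD j
    have hCx : 0 ≤ (C *ᵥ x) j := hmulVec_nonneg C x hC (fun j' => (hxpos j').le) j
    nlinarith [ht0]
  have hρD : spectralRadius ℂ (Dm.map (algebraMap ℝ ℂ)) ≤ ENNReal.ofReal t :=
    key Dm hD y hypos hDy
  have hρD1 : spectralRadius ℂ (Dm.map (algebraMap ℝ ℂ)) < 1 :=
    lt_of_le_of_lt hρD (by simpa using ENNReal.ofReal_lt_one.2 ht1)
  -- geometric series for (1 - D)⁻¹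
  have hDk := pow_entry_nonneg Dm hD
  have hDsum : ∀ i j, Summable fun k : ℕ => (Dm ^ k) i j := by
    intro i j
    have h1 : spectralRadius ℂ (Dm.map (algebraMap ℝ ℂ)) < ENNReal.ofReal 1 := by
      simpa using hρD1
    simpa using summable_pow_div Dm one_pos h1 i j
  set P : Matrix (Fin d₂) (Fin d₂) ℝ := Matrix.of fun i j => ∑' k, (Dm ^ k) i j with hP
  have hPapp : ∀ i j, P i j = ∑' k, (Dm ^ k) i j := fun i j => rfl
  have hPnn : ∀ i j, 0 ≤ P i j := fun i j =>
    tsum_nonneg fun k => hDk k i j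
  have hDP : Dm * P = P - 1 := by
    ext i j
    rw [Matrix.mul_apply]
    have e1 : ∀ l, Dm i l * P l j = ∑' k, Dm i l * (Dm ^ k) l j := fun l => by
      rw [hPapp, tsum_mul_left]
    have e2 : ∑ l, ∑' k, Dm i l * (Dm ^ k) l j = ∑' k, ∑ l, Dm i l * (Dm ^ k) l j :=
      (Summable.tsum_finsetSum fun l _ => (hDsum l j).mul_left _).symm
    have e3 : ∀ k, ∑ l, Dm i l * (Dm ^ k) l j = (Dm ^ (k + 1)) i j := fun k => by
      rw [pow_succ', Matrix.mul_apply]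
    have e4 : ∑' k, (Dm ^ (k + 1)) i j = P i j - (1 : Matrix (Fin d₂) (Fin d₂) ℝ) i j := by
      have h0 := Summable.tsum_eq_zero_add (hDsum i j)
      rw [pow_zero] at h0
      rw [hPapp]
      linarith
    calc ∑ l, Dm i l * P l j = ∑ l, ∑' k, Dm i l * (Dm ^ k) l j :=
          Finset.sum_congr rfl fun l _ => e1 l
      _ = ∑' k, ∑ l, Dm i l * (Dm ^ k) l j := e2
      _ = ∑' k, (Dm ^ (k + 1)) i j := tsum_congr e3
      _ = P i j - (1 : Matrix (Fin d₂) (Fin d₂) ℝ) i j := e4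
      _ = (P - 1) i j := (Matrix.sub_apply _ _ _ _).symm
  have hPD : P * Dm = P - 1 := by
    ext i j
    rw [Matrix.mul_apply]
    have e1 : ∀ l, P i l * Dm l j = ∑' k, (Dm ^ k) i l * Dm l j := fun l => by
      rw [hPapp, tsum_mul_right]
    have e2 : ∑ l, ∑' k, (Dm ^ k) i l * Dm l j = ∑' k, ∑ l, (Dm ^ k) i l * Dm l j :=
      (Summable.tsum_finsetSum fun l _ => (hDsum i l).mul_right _).symm
    have e3 : ∀ k, ∑ l, (Dm ^ k) i l * Dm l j = (Dm ^ (k + 1)) i j := fun k => by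
      rw [pow_succ, Matrix.mul_apply]
    have e4 : ∑' k, (Dm ^ (k + 1)) i j = P i j - (1 : Matrix (Fin d₂) (Fin d₂) ℝ) i j := by
      have h0 := Summable.tsum_eq_zero_add (hDsum i j)
      rw [pow_zero] at h0
      rw [hPapp]
      linarith
    calc ∑ l, P i l * Dm l j = ∑ l, ∑' k, (Dm ^ k) i l * Dm l j :=
          Finset.sum_congr rfl fun l _ => e1 l
      _ = ∑' k, ∑ l, (Dm ^ k) i l * Dm l j := e2
      _ = ∑' k, (Dm ^ (k + 1)) i j := tsum_congr e3
      _ = P i j - (1 : Matrix (Fin d₂) (Fin d₂) ℝ) i j := e4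
      _ = (P - 1) i j := (Matrix.sub_apply _ _ _ _).symm
  have hleft : (1 - Dm) * P = 1 := by
    rw [sub_mul, one_mul, hDP, sub_sub_cancel]
  have hright : P * (1 - Dm) = 1 := by
    rw [mul_sub, mul_one, hPD, sub_sub_cancel]
  have hUnit : IsUnit (1 - Dm) := ⟨⟨1 - Dm, P, hleft, hright⟩, rfl⟩
  have hInv : (1 - Dm)⁻¹ = P := Matrix.inv_eq_right_inv hleft
  -- Schur complement bound
  have hBPnn : ∀ i j, 0 ≤ (B * P) i j := fun i j => by
    rw [Matrix.mul_apply]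
    exact Finset.sum_nonneg fun l _ => mul_nonneg (hB i l) (hPnn l j)
  have hBPCnn : ∀ i j, 0 ≤ (B * P * C) i j := fun i j => by
    rw [Matrix.mul_apply]
    exact Finset.sum_nonneg fun l _ => mul_nonneg (hBPnn i l) (hC l j)
  have hSnn : ∀ i j, 0 ≤ (A + B * P * C) i j := fun i j => by
    rw [Matrix.add_apply]
    exact add_nonneg (hA i j) (hBPCnn i j)
  set z : Fin d₂ → ℝ := fun l => ((1 - Dm) *ᵥ y) l - (C *ᵥ x) l with hzdef
  have hznn : ∀ l, 0 ≤ z l := by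
    intro l
    have h1 := hCD l
    have h2 : ((1 - Dm) *ᵥ y) l = y l - (Dm *ᵥ y) l := by
      rw [Matrix.sub_mulVec, Matrix.one_mulVec]
      simp
    rw [hzdef]
    simp only [h2]
    nlinarith [hypos l]
  have hw : ∀ j, (P *ᵥ (C *ᵥ x)) j ≤ y j := by
    have h3 : (C *ᵥ x) + z = (1 - Dm) *ᵥ y := by
      funext l
      simp [hzdef]
    have h4 : P *ᵥ ((1 - Dm) *ᵥ y) = y := by
      rw [Matrix.mulVec_mulVec, hright, Matrix.one_mulVec]
    have h5 : P *ᵥ (C *ᵥ x) + P *ᵥ z = y := by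
      rw [← Matrix.mulVec_add, h3, h4]
    intro j
    have h6 : 0 ≤ (P *ᵥ z) j := hmulVec_nonneg P z hPnn hznn j
    have h7 := congrFun h5 j
    simp only [Pi.add_apply] at h7
    linarith
  have hSx : ∀ i, ((A + B * P * C) *ᵥ x) i ≤ t * x i := by
    intro i
    rw [Matrix.add_mulVec]
    have h4 : (B * P * C) *ᵥ x = B *ᵥ (P *ᵥ (C *ᵥ x)) := by
      rw [Matrix.mulVec_mulVec, Matrix.mulVec_mulVec]
    have h5 : (B *ᵥ (P *ᵥ (C *ᵥ x))) i ≤ (B *ᵥ y) i := by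
      simp only [Matrix.mulVec, dotProduct]
      exact Finset.sum_le_sum fun j _ => mul_le_mul_of_nonneg_left (hw j) (hB i j)
    have h6 := hAB i
    simp only [Pi.add_apply]
    rw [h4]
    linarith
  have hρS : spectralRadius ℂ ((A + B * P * C).map (algebraMap ℝ ℂ)) ≤ ENNReal.ofReal t :=
    key (A + B * P * C) hSnn x hxpos hSx
  refine ⟨hρD1, hUnit, ?_, ?_, ?_⟩
  · intro i j
    rw [hInv]
    exact hPapp i j
  · intro i j
    rw [hInv]
    exact hPnn i j
  · rw [hInv]
    exact hρS


end Stmt12Aux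

open Stmt12Aux in
/-- **From the proof of Proposition 5.6.**
Spectral radius of the Schur-type reduction of a nonnegative block matrix. -/
theorem stmt_12
    {d₁ d₂ : ℕ} (hd₁ : 1 ≤ d₁) (hd₂ : 1 ≤ d₂)
    (A : Matrix (Fin d₁) (Fin d₁) ℝ) (B : Matrix (Fin d₁) (Fin d₂) ℝ)
    (C : Matrix (Fin d₂) (Fin d₁) ℝ) (Dm : Matrix (Fin d₂) (Fin d₂) ℝ)
    (hA : ∀ i j, 0 ≤ A i j) (hB : ∀ i j, 0 ≤ B i j)
    (hC : ∀ i j, 0 ≤ C i j) (hD : ∀ i j, 0 ≤ Dm i j)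
    (hN : spectralRadius ℂ ((Matrix.fromBlocks A B C Dm).map (algebraMap ℝ ℂ)) < 1) :
    spectralRadius ℂ (Dm.map (algebraMap ℝ ℂ)) < 1 ∧
      IsUnit (1 - Dm) ∧
      (∀ i j, (1 - Dm)⁻¹ i j = ∑' k : ℕ, (Dm ^ k) i j) ∧
      (∀ i j, 0 ≤ (1 - Dm)⁻¹ i j) ∧
      spectralRadius ℂ ((A + B * (1 - Dm)⁻¹ * C).map (algebraMap ℝ ℂ)) ≤
        spectralRadius ℂ ((Matrix.fromBlocks A B C Dm).map (algebraMap ℝ ℂ)) := by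
  -- pick a parameter `t` and invoke the master lemma to prove a strengthened claim
  have hmain : ∀ c : ℝ≥0∞,
      spectralRadius ℂ ((Matrix.fromBlocks A B C Dm).map (algebraMap ℝ ℂ)) < c → c < 1 →
      spectralRadius ℂ (Dm.map (algebraMap ℝ ℂ)) < 1 ∧
      IsUnit (1 - Dm) ∧
      (∀ i j, (1 - Dm)⁻¹ i j = ∑' k : ℕ, (Dm ^ k) i j) ∧
      (∀ i j, 0 ≤ (1 - Dm)⁻¹ i j) ∧
      spectralRadius ℂ ((A + B * (1 - Dm)⁻¹ * C).map (algebraMap ℝ ℂ)) ≤ c := by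
    intro c hc1 hc2
    have hctop : c ≠ ⊤ := (hc2.trans_le le_top).ne
    have hc0 : 0 < c := lt_of_le_of_lt zero_le hc1
    set t := c.toReal with htdef
    have ht0 : 0 < t := ENNReal.toReal_pos hc0.ne' hctop
    have hoc : ENNReal.ofReal t = c := ENNReal.ofReal_toReal hctop
    have ht1 : t < 1 := by
      have := ENNReal.toReal_lt_toReal hctop (by norm_num : (1 : ℝ≥0∞) ≠ ⊤) |>.2 hc2
      simpa using this
    have hN' : spectralRadius ℂ ((Matrix.fromBlocks A B C Dm).map (algebraMap ℝ ℂ)) <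
        ENNReal.ofReal t := by rw [hoc]; exact hc1
    obtain ⟨h1, h2, h3, h4, h5⟩ := master A B C Dm hA hB hC hD ht0 ht1 hN'
    exact ⟨h1, h2, h3, h4, by rwa [hoc] at h5⟩
  obtain ⟨c₀, hc₀1, hc₀2⟩ := exists_between hN
  obtain ⟨h1, h2, h3, h4, -⟩ := hmain c₀ hc₀1 hc₀2
  refine ⟨h1, h2, h3, h4, ?_⟩
  by_contra hcon
  push_neg at hcon
  have hlt : spectralRadius ℂ ((Matrix.fromBlocks A B C Dm).map (algebraMap ℝ ℂ)) <
      min (spectralRadius ℂ ((A + B * (1 - Dm)⁻¹ * C).map (algebraMap ℝ ℂ))) 1 :=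
    lt_min hcon hN
  obtain ⟨c, hcl, hcr⟩ := exists_between hlt
  obtain ⟨-, -, -, -, h5⟩ := hmain c hcl (lt_of_lt_of_le hcr (min_le_right _ _))
  exact absurd h5 (not_le.2 (lt_of_lt_of_le hcr (min_le_left _ _)))
end

section
/- Stability of the restricted eigenvalue property under entrywise perturbation (Proposition 7.11): Let U, V ∈ ℝ^{Φ×Φ}, η > 0, c > 0, s ∈ ℕ and ε > 0. If U satisfies RE(η,c,s) and |U_{ij} − V_{ij}| ≤ ε for all i, j ∈ Φ, then V satisfies RE(η − ε(c+1)²s, c, s). -/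
open scoped BigOperators
open Matrix

/-- The restricted eigenvalue property `RE(η, c, s)`. -/
def RestrictedEigenvalue {Φ : Type*} [Fintype Φ] [DecidableEq Φ]
    (U : Matrix Φ Φ ℝ) (η c : ℝ) (s : ℕ) : Prop :=
  ∀ (a : Φ → ℝ) (J : Finset Φ), J.card ≤ s →
    (∑ φ ∈ Jᶜ, |a φ|) ≤ c * ∑ φ ∈ J, |a φ| →
    η * (∑ φ ∈ J, a φ ^ 2) ≤ a ⬝ᵥ U.mulVec a

/-- **Proposition 7.11.** Stability of the restricted eigenvalue property under
entrywise perturbation. -/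
theorem stmt_16
    {Φ : Type*} [Fintype Φ] [Nonempty Φ] [DecidableEq Φ]
    (U V : Matrix Φ Φ ℝ) (η c ε : ℝ) (s : ℕ)
    (hη : 0 < η) (hc : 0 < c) (hε : 0 < ε)
    (hU : RestrictedEigenvalue U η c s)
    (hUV : ∀ i j, |U i j - V i j| ≤ ε) :
    RestrictedEigenvalue V (η - ε * (c + 1) ^ 2 * s) c s := by
  intro a J hJ hcone
  set S1 := ∑ φ ∈ J, |a φ| with hS1
  set Q := ∑ φ ∈ J, a φ ^ 2 with hQ
  have hQ0 : 0 ≤ Q := Finset.sum_nonneg fun _ _ => sq_nonneg _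
  have hS10 : 0 ≤ S1 := Finset.sum_nonneg fun _ _ => abs_nonneg _
  -- total l1 norm bound
  have htot : (∑ i, |a i|) ≤ (c + 1) * S1 := by
    have : (∑ i, |a i|) = S1 + ∑ φ ∈ Jᶜ, |a φ| := by
      rw [hS1, ← Finset.sum_add_sum_compl J]
    rw [this]; nlinarith
  have htot0 : 0 ≤ ∑ i, |a i| := Finset.sum_nonneg fun _ _ => abs_nonneg _
  -- Cauchy-Schwarz: S1^2 ≤ card J * Q
  have hcs : S1 ^ 2 ≤ (J.card : ℝ) * Q := by
    have := sq_sum_le_card_mul_sum_sq (s := J) (f := fun φ => |a φ|)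
    simpa [sq_abs] using this
  have hcs2 : S1 ^ 2 ≤ (s : ℝ) * Q := by
    refine hcs.trans (mul_le_mul_of_nonneg_right ?_ hQ0)
    exact_mod_cast hJ
  -- perturbation bound
  have hpert : |a ⬝ᵥ U.mulVec a - a ⬝ᵥ V.mulVec a| ≤ ε * (∑ i, |a i|) ^ 2 := by
    have heq : a ⬝ᵥ U.mulVec a - a ⬝ᵥ V.mulVec a
        = ∑ i, ∑ j, a i * (U i j - V i j) * a j := by
      simp only [dotProduct, Matrix.mulVec, dotProduct, Finset.mul_sum,
        ← Finset.sum_sub_distrib]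
      congr 1; ext i; congr 1; ext j; ring
    rw [heq]
    calc |∑ i, ∑ j, a i * (U i j - V i j) * a j|
        ≤ ∑ i, ∑ j, |a i * (U i j - V i j) * a j| := by
          refine (Finset.abs_sum_le_sum_abs _ _).trans ?_
          exact Finset.sum_le_sum fun i _ => Finset.abs_sum_le_sum_abs _ _
      _ ≤ ∑ i, ∑ j, |a i| * ε * |a j| := by
          refine Finset.sum_le_sum fun i _ => Finset.sum_le_sum fun j _ => ?_
          rw [abs_mul, abs_mul]
          have h1 := hUV i j
          have h2 := abs_nonneg (a i)
          have h3 := abs_nonneg (a j)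
          have : |a i| * |U i j - V i j| ≤ |a i| * ε := mul_le_mul_of_nonneg_left h1 h2
          exact mul_le_mul_of_nonneg_right this h3
      _ = ε * (∑ i, |a i|) ^ 2 := by
          rw [sq, Finset.sum_mul_sum]
          rw [Finset.mul_sum]
          congr 1; ext i; rw [Finset.mul_sum]; congr 1; ext j; ring
  have hUa := hU a J hJ hcone
  have h1 : ε * (∑ i, |a i|) ^ 2 ≤ ε * ((c + 1) * S1) ^ 2 := by
    apply mul_le_mul_of_nonneg_left _ hε.le
    exact pow_le_pow_left₀ htot0 htot 2
  have h2 : ((c + 1) * S1) ^ 2 ≤ (c + 1) ^ 2 * ((s : ℝ) * Q) := by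
    rw [mul_pow]
    exact mul_le_mul_of_nonneg_left hcs2 (by positivity)
  have habs := abs_le.mp hpert
  nlinarith [habs.1, habs.2, h1, h2, mul_le_mul_of_nonneg_left h2 hε.le]
end
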